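/- arXiv:1410.3396 — 3 statements merged into one kernel-verified Lean document; each statement's English description precedes it below -/
import Mathlib

section
/- (Easy Perturbation Lemma) Let (α, β, η) : (C, ∂) → (C', ∂') be a reduction of chain complexes and let δ' be a perturbation of ∂', i.e., ∂' + δ' is again a differential on C'. Then (α, β, η) is a reduction from (C, ∂ + β δ' α) to (C', ∂' + δ'), where in particular ∂ + β δ' α is a differential on C. -/
/-- A non-negatively graded chain complex of abelian groups. -/
structure ChCx where
  X : ℕ → Type
  ab : ∀ n, AddCommGroup (X n)
  d : ∀ n, X (n + 1) →+ X n
  dd : ∀ n (c : X (n + 2)), d n (d (n + 1) c) = 0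

attribute [instance] ChCx.ab

/-- A chain map between chain complexes. -/
structure ChMap (C C' : ChCx) where
  f : ∀ n, C.X n →+ C'.X n
  comm : ∀ n (c : C.X (n + 1)), f n (C.d n c) = C'.d n (f (n + 1) c)

/-- A reduction `(α, β, η) : C ⇒ C'`. -/
structure Reduction (C C' : ChCx) where
  α : ChMap C C'
  β : ChMap C' C
  η : ∀ n, C.X n →+ C.X (n + 1)
  ηβ : ∀ n (c : C'.X n), η n (β.f n c) = 0
  αη : ∀ n (c : C.X n), α.f (n + 1) (η n c) = 0
  αβ : ∀ n (c : C'.X n), α.f n (β.f n c) = c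
  ηη : ∀ n (c : C.X n), η (n + 1) (η n c) = 0
  hmt0 : ∀ c : C.X 0, C.d 0 (η 0 c) = c - β.f 0 (α.f 0 c)
  hmt : ∀ n (c : C.X (n + 1)),
    C.d (n + 1) (η (n + 1) c) + η n (C.d n c) = c - β.f (n + 1) (α.f (n + 1) c)

/-- Easy Perturbation Lemma: if `δ'` is a perturbation of `∂'`, then
`∂ + βδ'α` is a differential on `C` and `(α, β, η)` is a reduction
`(C, ∂ + βδ'α) ⇒ (C', ∂' + δ')`. -/
theorem easy_perturbation_lemma (C C' : ChCx) (R : Reduction C C')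
    (δ' : ∀ n, C'.X (n + 1) →+ C'.X n)
    (hδ' : ∀ n (c : C'.X (n + 2)),
      (C'.d n + δ' n) ((C'.d (n + 1) + δ' (n + 1)) c) = 0) :
    ∃ hd : ∀ n (c : C.X (n + 2)),
        (C.d n + (R.β.f n).comp ((δ' n).comp (R.α.f (n + 1))))
          ((C.d (n + 1) + (R.β.f (n + 1)).comp ((δ' (n + 1)).comp (R.α.f (n + 2)))) c) = 0,
      ∃ R' : Reduction
          { X := C.X, ab := C.ab,
            d := fun n => C.d n + (R.β.f n).comp ((δ' n).comp (R.α.f (n + 1))),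
            dd := hd }
          { X := C'.X, ab := C'.ab, d := fun n => C'.d n + δ' n, dd := hδ' },
        R'.α.f = R.α.f ∧ R'.β.f = R.β.f ∧ R'.η = R.η := by

  classical
  have key : ∀ n (x : C'.X (n + 2)),
      δ' n (C'.d (n + 1) x) + (C'.d n (δ' (n + 1) x) + δ' n (δ' (n + 1) x)) = 0 := by
    intro n x
    have h := hδ' n x
    simp only [AddMonoidHom.add_apply, map_add] at h
    rw [C'.dd n x, zero_add] at h
    exact h
  have hd : ∀ n (c : C.X (n + 2)),
      (C.d n + (R.β.f n).comp ((δ' n).comp (R.α.f (n + 1))))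
        ((C.d (n + 1) + (R.β.f (n + 1)).comp ((δ' (n + 1)).comp (R.α.f (n + 2)))) c) = 0 := by
    intro n c
    simp only [AddMonoidHom.add_apply, AddMonoidHom.comp_apply, map_add,
      show n + 1 + 1 = n + 2 from rfl]
    rw [C.dd n c, zero_add, R.α.comm, R.αβ, ← R.β.comm, ← map_add, ← map_add, key, map_zero]
  refine ⟨hd, ⟨⟨⟨R.α.f, ?_⟩, ⟨R.β.f, ?_⟩, R.η, R.ηβ, R.αη, R.αβ, R.ηη, ?_, ?_⟩, rfl, rfl, rfl⟩⟩
  · intro n c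
    simp only [AddMonoidHom.add_apply, AddMonoidHom.comp_apply, map_add, R.α.comm, R.αβ]
  · intro n c
    simp only [AddMonoidHom.add_apply, AddMonoidHom.comp_apply, map_add, R.β.comm, R.αβ]
  · intro c
    simp only [AddMonoidHom.add_apply, AddMonoidHom.comp_apply, R.αη, map_zero, add_zero]
    exact R.hmt0 c
  · intro n c
    simp only [AddMonoidHom.add_apply, AddMonoidHom.comp_apply, map_add, R.αη, R.ηβ,
      map_zero, add_zero]
    exact R.hmt n c
end

section
/- (Basic Perturbation Lemma) Let (α, β, η) : (C, ∂) → (C', ∂') be a reduction of chain complexes and let δ be a perturbation of ∂ such that the degree −zero operator ηδ is pointwise nilpotent (for every c ∈ C there is i with (ηδ)^i(c) = 0). Define φ = Σ_{i≥0} (−1)^i (ηδ)^i and ψ = Σ_{i≥0} (−1)^i (δη)^i (finite sums pointwise). Then δ' = α δ φ β is a perturbation of ∂', and (αψ, φβ, φη) is a reduction from (C, ∂ + δ) to (C', ∂' + δ'). -/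
section Geo

variable {M N : Type} [AddCommGroup M] [AddCommGroup N]

private lemma swap_sub {G : Type} [AddCommGroup G] {s t c : G} (h : s = c - t) :
    t = c - s := by rw [h]; abel

private lemma iter_map_zero (e : M →+ M) (j : ℕ) : (⇑e)^[j] 0 = 0 :=
  Function.iterate_fixed (map_zero e) j

private def pS (e : M →+ M) (c : M) (m : ℕ) : M :=
  ∑ i ∈ Finset.range m, ((-1 : ℤ) ^ i) • (⇑e)^[i] c

private lemma pS_succ (e : M →+ M) (c : M) (m : ℕ) :
    pS e c (m + 1) = pS e c m + ((-1 : ℤ) ^ m) • (⇑e)^[m] c :=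
  Finset.sum_range_succ _ _

private lemma iter_eventually (e : M →+ M) {c : M} {k : ℕ} (hk : (⇑e)^[k] c = 0)
    {m : ℕ} (hm : k ≤ m) : (⇑e)^[m] c = 0 := by
  obtain ⟨j, rfl⟩ := Nat.exists_eq_add_of_le hm
  rw [Nat.add_comm, Function.iterate_add_apply, hk, iter_map_zero]

private lemma pS_stable (e : M →+ M) {c : M} {k : ℕ} (hk : (⇑e)^[k] c = 0) :
    ∀ m, k ≤ m → pS e c m = pS e c k := by
  intro m
  induction m with
  | zero => intro hm; have : k = 0 := Nat.le_zero.mp hm; subst this; rfl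
  | succ m ih =>
    intro hm
    rcases Nat.lt_or_ge m k with h | h
    · have : k = m + 1 := le_antisymm hm h
      subst this; rfl
    · rw [pS_succ, iter_eventually e hk h, smul_zero, add_zero, ih h]

private lemma pS_add (e : M →+ M) (c c' : M) (m : ℕ) :
    pS e (c + c') m = pS e c m + pS e c' m := by
  unfold pS
  rw [← Finset.sum_add_distrib]
  exact Finset.sum_congr rfl fun i _ => by rw [iterate_map_add, smul_add]

private noncomputable def geo (e : M →+ M) (h : ∀ c, ∃ i, (⇑e)^[i] c = 0) : M →+ M where
  toFun c := pS e c (h c).choose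
  map_zero' := Finset.sum_eq_zero fun i _ => by rw [iter_map_zero, smul_zero]
  map_add' c c' := by
    show pS e (c + c') _ = pS e c _ + pS e c' _
    have h0 := (h (c + c')).choose_spec
    have h1 := (h c).choose_spec
    have h2 := (h c').choose_spec
    have le1 : (h (c + c')).choose ≤ (h (c + c')).choose ⊔ (h c).choose ⊔ (h c').choose :=
      le_sup_of_le_left le_sup_left
    have le2 : (h c).choose ≤ (h (c + c')).choose ⊔ (h c).choose ⊔ (h c').choose :=
      le_sup_of_le_left le_sup_right
    have le3 : (h c').choose ≤ (h (c + c')).choose ⊔ (h c).choose ⊔ (h c').choose :=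
      le_sup_right
    rw [← pS_stable e h0 _ le1, pS_add, pS_stable e h1 _ le2, pS_stable e h2 _ le3]

private lemma geo_eq (e : M →+ M) (h : ∀ c, ∃ i, (⇑e)^[i] c = 0) {c : M} {k : ℕ}
    (hk : (⇑e)^[k] c = 0) : geo e h c = pS e c k := by
  show pS e c (h c).choose = pS e c k
  rcases le_total (h c).choose k with h1 | h1
  · rw [pS_stable e (h c).choose_spec k h1]
  · rw [pS_stable e hk _ h1]

private lemma pS_key (e : M →+ M) (c : M) :
    ∀ m, pS e c m + e (pS e c m) + ((-1 : ℤ) ^ m) • (⇑e)^[m] c = c := by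
  intro m
  induction m with
  | zero => simp [pS]
  | succ m ih =>
    have h1 : e ((⇑e)^[m] c) = (⇑e)^[m + 1] c := (Function.iterate_succ_apply' _ _ _).symm
    have h2 : ((-1 : ℤ) ^ (m + 1)) • (⇑e)^[m + 1] c = -(((-1 : ℤ) ^ m) • (⇑e)^[m + 1] c) := by
      rw [pow_succ, mul_neg_one, neg_smul]
    calc pS e c (m + 1) + e (pS e c (m + 1)) + ((-1 : ℤ) ^ (m + 1)) • (⇑e)^[m + 1] c
        = pS e c m + e (pS e c m) + ((-1 : ℤ) ^ m) • (⇑e)^[m] c := by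
          rw [pS_succ, map_add, map_zsmul, h1, h2]; abel
      _ = c := ih

private lemma geo_one (e : M →+ M) (h : ∀ c, ∃ i, (⇑e)^[i] c = 0) (c : M) :
    geo e h c + e (geo e h c) = c := by
  obtain ⟨k, hk⟩ := h c
  rw [geo_eq e h hk]
  have := pS_key e c k
  rw [hk, smul_zero, add_zero] at this
  exact this

private lemma pS_shift (e : M →+ M) (c : M) :
    ∀ m, pS e c (m + 1) + pS e (e c) m = c := by
  intro m
  induction m with
  | zero => simp [pS]
  | succ m ih =>
    have h1 : (⇑e)^[m] (e c) = (⇑e)^[m + 1] c := (Function.iterate_succ_apply _ _ _).symm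
    have h2 : ((-1 : ℤ) ^ (m + 1)) • (⇑e)^[m + 1] c = -(((-1 : ℤ) ^ m) • (⇑e)^[m + 1] c) := by
      rw [pow_succ, mul_neg_one, neg_smul]
    calc pS e c (m + 1 + 1) + pS e (e c) (m + 1)
        = pS e c (m + 1) + pS e (e c) m := by
          rw [pS_succ e c (m + 1), pS_succ e (e c) m, h1, h2]; abel
      _ = c := ih

private lemma geo_e (e : M →+ M) (h : ∀ c, ∃ i, (⇑e)^[i] c = 0) (c : M) :
    geo e h (e c) = c - geo e h c := by
  obtain ⟨k, hk⟩ := h c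
  have hk1 : (⇑e)^[k + 1] c = 0 := iter_eventually e hk (Nat.le_succ k)
  have hke : (⇑e)^[k] (e c) = 0 := by
    rw [← Function.iterate_succ_apply, hk1]
  rw [geo_eq e h hke, geo_eq e h hk1]
  exact eq_sub_of_add_eq' (pS_shift e c k)

private lemma geo_left (e : M →+ M) (h : ∀ c, ∃ i, (⇑e)^[i] c = 0)
    (g : M →+ N) (hg : ∀ x, g (e x) = 0) (c : M) : g (geo e h c) = g c := by
  obtain ⟨k, hk⟩ := h c
  have hk1 : (⇑e)^[k + 1] c = 0 := iter_eventually e hk (Nat.le_succ k)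
  rw [geo_eq e h hk1]
  clear hk hk1
  induction k with
  | zero => simp [pS]
  | succ m ih =>
    rw [pS_succ, map_add, map_zsmul, Function.iterate_succ_apply', hg, smul_zero, add_zero, ih]

private lemma geo_of_zero (e : M →+ M) (h : ∀ c, ∃ i, (⇑e)^[i] c = 0) {c : M}
    (h0 : e c = 0) : geo e h c = c := by
  have hk : (⇑e)^[1] c = 0 := by rwa [Function.iterate_one]
  rw [geo_eq e h hk]
  simp [pS]

private lemma pS_map (e : M →+ M) (e' : N →+ N) (g : M →+ N)
    (hg : ∀ x, g (e x) = e' (g x)) (c : M) (m : ℕ) :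
    g (pS e c m) = pS e' (g c) m := by
  unfold pS
  rw [map_sum]
  refine Finset.sum_congr rfl fun i _ => ?_
  rw [map_zsmul]
  congr 1
  exact Function.Semiconj.iterate_right hg i c

private lemma geo_nat (e : M →+ M) (h : ∀ c, ∃ i, (⇑e)^[i] c = 0)
    (e' : N →+ N) (h' : ∀ c, ∃ i, (⇑e')^[i] c = 0)
    (g : M →+ N) (hg : ∀ x, g (e x) = e' (g x)) (c : M) :
    g (geo e h c) = geo e' h' (g c) := by
  obtain ⟨k, hk⟩ := h c
  have hk' : (⇑e')^[k] (g c) = 0 := by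
    rw [← Function.Semiconj.iterate_right hg k c, hk, map_zero]
  rw [geo_eq e h hk, geo_eq e' h' hk', pS_map e e' g hg]

end Geo

/-- Basic Perturbation Lemma. -/
theorem basic_perturbation_lemma (C C' : ChCx) (R : Reduction C C')
    (δ : ∀ n, C.X (n + 1) →+ C.X n)
    (hδ : ∀ n (c : C.X (n + 2)),
      (C.d n + δ n) ((C.d (n + 1) + δ (n + 1)) c) = 0)
    (hnil : ∀ n (c : C.X (n + 1)), ∃ i : ℕ,
      (fun x => R.η n (δ n x))^[i] c = 0) :
    ∃ φ ψ : ∀ n, C.X n →+ C.X n,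
      -- `φ = Σ (−1)^i (ηδ)^i` (in degree 0 the operator `ηδ` vanishes)
      (∀ c : C.X 0, φ 0 c = c) ∧
      (∀ n (c : C.X (n + 1)), ∃ N : ℕ, ∀ m ≥ N,
        φ (n + 1) c =
          ∑ i ∈ Finset.range m, ((-1 : ℤ) ^ i) • (fun x => R.η n (δ n x))^[i] c) ∧
      -- `ψ = Σ (−1)^i (δη)^i`
      (∀ n (c : C.X n), ∃ N : ℕ, ∀ m ≥ N,
        ψ n c =
          ∑ i ∈ Finset.range m, ((-1 : ℤ) ^ i) • (fun x => δ n (R.η n x))^[i] c) ∧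
      -- `δ' = αδφβ` is a perturbation of `∂'` …
      ∃ hδ' : ∀ n (c : C'.X (n + 2)),
          (C'.d n + (R.α.f n).comp ((δ n).comp ((φ (n + 1)).comp (R.β.f (n + 1)))))
            ((C'.d (n + 1) +
              (R.α.f (n + 1)).comp
                ((δ (n + 1)).comp ((φ (n + 2)).comp (R.β.f (n + 2))))) c) = 0,
        -- … and `(αψ, φβ, φη)` is a reduction `(C, ∂ + δ) ⇒ (C', ∂' + δ')`
        ∃ R' : Reduction
            { X := C.X, ab := C.ab, d := fun n => C.d n + δ n, dd := hδ }
            { X := C'.X, ab := C'.ab,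
              d := fun n =>
                C'.d n + (R.α.f n).comp ((δ n).comp ((φ (n + 1)).comp (R.β.f (n + 1)))),
              dd := hδ' },
          (∀ n (c : C.X n), R'.α.f n c = R.α.f n (ψ n c)) ∧
          (∀ n (c : C'.X n), R'.β.f n c = φ n (R.β.f n c)) ∧
          (∀ n (c : C.X n), R'.η n c = φ (n + 1) (R.η n c)) := by

  classical
  have hE : ∀ n (c : C.X (n + 1)), ∃ i, (⇑((R.η n).comp (δ n)))^[i] c = 0 := hnil
  have hF : ∀ n (c : C.X n), ∃ i, (⇑((δ n).comp (R.η n)))^[i] c = 0 := by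
    intro n c
    obtain ⟨i, hi⟩ := hE n (R.η n c)
    refine ⟨i + 1, ?_⟩
    have semi : Function.Semiconj ⇑(δ n) ⇑((R.η n).comp (δ n)) ⇑((δ n).comp (R.η n)) :=
      fun x => rfl
    rw [Function.iterate_succ_apply]
    show (⇑((δ n).comp (R.η n)))^[i] (δ n (R.η n c)) = 0
    rw [← Function.Semiconj.iterate_right semi i (R.η n c), hi, map_zero]
  let φ' : ∀ n, C.X (n + 1) →+ C.X (n + 1) := fun n => geo ((R.η n).comp (δ n)) (hE n)
  let ψ' : ∀ n, C.X n →+ C.X n := fun n => geo ((δ n).comp (R.η n)) (hF n)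
  have Hone : ∀ n (c : C.X (n + 1)), R.η n (δ n (φ' n c)) = c - φ' n c := by
    intro n c
    exact eq_sub_of_add_eq' (geo_one ((R.η n).comp (δ n)) (hE n) c)
  have Hphie : ∀ n (c : C.X (n + 1)), φ' n (R.η n (δ n c)) = c - φ' n c := by
    intro n c; exact geo_e ((R.η n).comp (δ n)) (hE n) c
  have Hpsione : ∀ n (c : C.X n), δ n (R.η n (ψ' n c)) = c - ψ' n c := by
    intro n c; exact eq_sub_of_add_eq' (geo_one ((δ n).comp (R.η n)) (hF n) c)
  have Hnat1 : ∀ n (c : C.X (n + 1)), δ n (φ' n c) = ψ' n (δ n c) := by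
    intro n c
    exact geo_nat _ (hE n) _ (hF n) (δ n) (fun x => rfl) c
  have Hnat2 : ∀ n (c : C.X n), φ' n (R.η n c) = R.η n (ψ' n c) := by
    intro n c
    exact (geo_nat _ (hF n) _ (hE n) (R.η n) (fun x => rfl) c).symm
  have Hpsibeta : ∀ n (c : C'.X n), ψ' n (R.β.f n c) = R.β.f n c := by
    intro n c
    refine geo_of_zero _ (hF n) ?_
    show δ n (R.η n (R.β.f n c)) = 0
    rw [R.ηβ, map_zero]
  have Hpsieta : ∀ n (c : C.X n), ψ' (n + 1) (R.η n c) = R.η n c := by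
    intro n c
    refine geo_of_zero _ (hF (n + 1)) ?_
    show δ (n + 1) (R.η (n + 1) (R.η n c)) = 0
    rw [R.ηη, map_zero]
  have Hetaphi : ∀ n (x : C.X (n + 1)), R.η (n + 1) (φ' n x) = R.η (n + 1) x := by
    intro n x
    refine geo_left _ (hE n) (R.η (n + 1)) ?_ x
    intro y
    show R.η (n + 1) (R.η n (δ n y)) = 0
    exact R.ηη n (δ n y)
  have Hphi1 : ∀ n (y : C.X (n + 1)), φ' n y = y - R.η n (δ n (φ' n y)) := by
    intro n y
    exact eq_sub_of_add_eq (geo_one ((R.η n).comp (δ n)) (hE n) y)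
  have Hpsi1 : ∀ n (c : C.X n), ψ' n c = c - δ n (φ' n (R.η n c)) := by
    intro n c
    rw [Hnat2 n c, Hpsione n c, sub_sub_cancel]
  have hbetaalpha : ∀ n (c : C.X (n + 1)),
      R.β.f (n + 1) (R.α.f (n + 1) c)
        = c - C.d (n + 1) (R.η (n + 1) c) - R.η n (C.d n c) := by
    intro n c
    rw [swap_sub (R.hmt n c)]
    abel
  have hbetaalpha0 : ∀ c : C.X 0,
      R.β.f 0 (R.α.f 0 c) = c - C.d 0 (R.η 0 c) :=
    fun c => swap_sub (R.hmt0 c)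
  have hDD : ∀ n (x : C.X (n + 2)),
      C.d n (δ (n + 1) x) = -δ n (C.d (n + 1) x) - δ n (δ (n + 1) x) := by
    intro n x
    have h := hδ n x
    simp only [AddMonoidHom.add_apply, map_add] at h
    rw [C.dd] at h
    have h2 : C.d n (δ (n + 1) x) + (δ n (C.d (n + 1) x) + δ n (δ (n + 1) x)) = 0 := by
      rw [← h]; abel
    rw [eq_neg_of_add_eq_zero_left h2]
    abel
  have K1zero : ∀ c : C.X 1,
      R.β.f 0 (R.α.f 0 (δ 0 (φ' 0 c))) = C.d 0 (φ' 0 c) + δ 0 (φ' 0 c) - C.d 0 c := by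
    intro c
    rw [hbetaalpha0 (δ 0 (φ' 0 c)), Hone 0 c, map_sub]
    abel
  have K1succ : ∀ n (c : C.X (n + 2)),
      φ' n (R.β.f (n + 1) (R.α.f (n + 1) (δ (n + 1) (φ' (n + 1) c))))
        = C.d (n + 1) (φ' (n + 1) c) + δ (n + 1) (φ' (n + 1) c) - φ' n (C.d (n + 1) c) := by
    intro n c
    rw [hbetaalpha n (δ (n + 1) (φ' (n + 1) c)), Hone (n + 1) c, hDD n (φ' (n + 1) c)]
    simp only [map_sub, map_add, map_neg]
    rw [Hphie n (C.d (n + 1) (φ' (n + 1) c)), Hphie n (δ (n + 1) (φ' (n + 1) c))]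
    abel
  have Clem0 : ∀ c : C.X 0,
      C.d 0 (φ' 0 (R.η 0 c)) + δ 0 (φ' 0 (R.η 0 c))
        = c - R.β.f 0 (R.α.f 0 (ψ' 0 c)) := by
    intro c
    rw [Hpsi1 0 c]
    simp only [map_sub]
    rw [K1zero (R.η 0 c), hbetaalpha0 c]
    abel
  have ClemS : ∀ n (c : C.X (n + 1)),
      C.d (n + 1) (φ' (n + 1) (R.η (n + 1) c)) + δ (n + 1) (φ' (n + 1) (R.η (n + 1) c))
        + φ' n (R.η n (C.d n c)) + φ' n (R.η n (δ n c))
        = c - φ' n (R.β.f (n + 1) (R.α.f (n + 1) (ψ' (n + 1) c))) := by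
    intro n c
    rw [Hpsi1 (n + 1) c]
    simp only [map_sub]
    rw [K1succ n (R.η (n + 1) c), hbetaalpha n c]
    simp only [map_sub]
    rw [Hphie n c]
    abel
  have Acomm : ∀ n (c : C.X (n + 1)),
      ψ' n (C.d n c + δ n c)
        = C.d n (ψ' (n + 1) c)
          + δ n (φ' n (R.β.f (n + 1) (R.α.f (n + 1) (ψ' (n + 1) c)))) := by
    intro n c
    have hc := swap_sub (ClemS n c)
    rw [hc, map_add, Hpsi1 n (C.d n c), ← Hnat1 n c, Hpsi1 (n + 1) c]
    simp only [map_sub, map_add]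
    rw [hDD n (φ' (n + 1) (R.η (n + 1) c)), Hphie n c]
    simp only [map_sub, map_add, map_neg]
    abel
  have sumφ : ∀ n (c : C.X (n + 1)), ∃ N : ℕ, ∀ m ≥ N,
      φ' n c = ∑ i ∈ Finset.range m, ((-1 : ℤ) ^ i) • (fun x => R.η n (δ n x))^[i] c := by
    intro n c
    obtain ⟨k, hk⟩ := hE n c
    refine ⟨k, fun m hm => ?_⟩
    show geo _ (hE n) c = pS ((R.η n).comp (δ n)) c m
    rw [geo_eq _ (hE n) hk, pS_stable _ hk m hm]
  have sumψ : ∀ n (c : C.X n), ∃ N : ℕ, ∀ m ≥ N,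
      ψ' n c = ∑ i ∈ Finset.range m, ((-1 : ℤ) ^ i) • (fun x => δ n (R.η n x))^[i] c := by
    intro n c
    obtain ⟨k, hk⟩ := hF n c
    refine ⟨k, fun m hm => ?_⟩
    show geo _ (hF n) c = pS ((δ n).comp (R.η n)) c m
    rw [geo_eq _ (hF n) hk, pS_stable _ hk m hm]
  refine ⟨fun n => Nat.rec (motive := fun n => C.X n →+ C.X n) (AddMonoidHom.id (C.X 0)) (fun k _ => φ' k) n, ψ',
    fun c => rfl, sumφ, sumψ, ?_⟩
  have hδ'pf : ∀ n (c : C'.X (n + 2)),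
      (C'.d n + (R.α.f n).comp ((δ n).comp ((φ' n).comp (R.β.f (n + 1)))))
        ((C'.d (n + 1) +
          (R.α.f (n + 1)).comp ((δ (n + 1)).comp ((φ' (n + 1)).comp (R.β.f (n + 2))))) c)
        = 0 := by
    intro n c
    simp only [AddMonoidHom.add_apply, AddMonoidHom.comp_apply, map_add]
    rw [C'.dd, ← R.α.comm n (δ (n + 1) (φ' (n + 1) (R.β.f (n + 2) c))),
      hDD n (φ' (n + 1) (R.β.f (n + 2) c)), R.β.comm (n + 1) c,
      K1succ n (R.β.f (n + 2) c)]
    simp only [map_sub, map_add, map_neg]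
    abel
  refine ⟨hδ'pf, ?_⟩
  refine ⟨{ α := { f := fun n => (R.α.f n).comp (ψ' n), comm := ?_ },
            β := { f := fun n => (Nat.rec (motive := fun n => C.X n →+ C.X n) (AddMonoidHom.id (C.X 0)) (fun k _ => φ' k) n).comp
                      (R.β.f n), comm := ?_ },
            η := fun n => (φ' n).comp (R.η n),
            ηβ := ?_, αη := ?_, αβ := ?_, ηη := ?_, hmt0 := ?_, hmt := ?_ },
          fun n c => rfl, fun n c => rfl, fun n c => rfl⟩
  · -- α comm
    intro n c
    show R.α.f n (ψ' n ((C.d n + δ n) c))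
      = (C'.d n + (R.α.f n).comp ((δ n).comp ((φ' n).comp (R.β.f (n + 1)))))
          (R.α.f (n + 1) (ψ' (n + 1) c))
    simp only [AddMonoidHom.add_apply, AddMonoidHom.comp_apply]
    rw [← R.α.comm n (ψ' (n + 1) c), ← map_add (R.α.f n)]
    exact congrArg (R.α.f n) (Acomm n c)
  · -- β comm
    intro n c
    match n with
    | 0 =>
      show R.β.f 0 ((C'.d 0 + (R.α.f 0).comp ((δ 0).comp ((φ' 0).comp (R.β.f 1)))) c)
        = (C.d 0 + δ 0) (φ' 0 (R.β.f 1 c))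
      simp only [AddMonoidHom.add_apply, AddMonoidHom.comp_apply, map_add]
      rw [R.β.comm 0 c, K1zero (R.β.f 1 c)]
      abel
    | (k + 1) =>
      show φ' k (R.β.f (k + 1)
          ((C'.d (k + 1) + (R.α.f (k + 1)).comp ((δ (k + 1)).comp ((φ' (k + 1)).comp (R.β.f (k + 2))))) c))
        = (C.d (k + 1) + δ (k + 1)) (φ' (k + 1) (R.β.f (k + 2) c))
      simp only [AddMonoidHom.add_apply, AddMonoidHom.comp_apply, map_add]
      rw [R.β.comm (k + 1) c, K1succ k (R.β.f (k + 2) c)]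
      abel
  · -- ηβ
    intro n c
    match n with
    | 0 =>
      show φ' 0 (R.η 0 (R.β.f 0 c)) = 0
      rw [R.ηβ, map_zero]
    | (k + 1) =>
      show φ' (k + 1) (R.η (k + 1) (φ' k (R.β.f (k + 1) c))) = 0
      rw [Hetaphi k (R.β.f (k + 1) c), R.ηβ, map_zero]
  · -- αη
    intro n c
    show R.α.f (n + 1) (ψ' (n + 1) (φ' n (R.η n c))) = 0
    rw [Hnat2 n c, Hpsieta n (ψ' n c), R.αη]
  · -- αβ
    intro n c
    match n with
    | 0 =>
      show R.α.f 0 (ψ' 0 (R.β.f 0 c)) = c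
      rw [Hpsibeta 0 c, R.αβ]
    | (k + 1) =>
      show R.α.f (k + 1) (ψ' (k + 1) (φ' k (R.β.f (k + 1) c))) = c
      rw [Hphi1 k (R.β.f (k + 1) c)]
      simp only [map_sub]
      rw [Hpsibeta (k + 1) c, Hpsieta k (δ k (φ' k (R.β.f (k + 1) c))), R.αη, R.αβ, sub_zero]
  · -- ηη
    intro n c
    show φ' (n + 1) (R.η (n + 1) (φ' n (R.η n c))) = 0
    rw [Hnat2 n c, R.ηη, map_zero]
  · -- hmt0
    intro c
    show (C.d 0 + δ 0) (φ' 0 (R.η 0 c)) = c - R.β.f 0 (R.α.f 0 (ψ' 0 c))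
    simp only [AddMonoidHom.add_apply]
    exact Clem0 c
  · -- hmt
    intro n c
    show (C.d (n + 1) + δ (n + 1)) (φ' (n + 1) (R.η (n + 1) c))
        + φ' n (R.η n ((C.d n + δ n) c))
      = c - φ' n (R.β.f (n + 1) (R.α.f (n + 1) (ψ' (n + 1) c)))
    simp only [AddMonoidHom.add_apply, map_add]
    rw [← ClemS n c]
    abel
end

section
/- Tensor products of reductions are reductions: if (α₁, β₁, η₁) : C₁ → C₁' and (α₂, β₂, η₂) : C₂ → C₂' are reductions of non-negatively graded chain complexes of abelian groups, then setting α = α₁ ⊗ α₂, β = β₁ ⊗ β₂, and η = η₁ ⊗ (β₂α₂) + id ⊗ η₂ (with appropriate Koszul signs) gives a reduction C₁ ⊗ C₂ → C₁' ⊗ C₂'. -/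
/-- Transport along an equality of degrees. -/
def ChCx.cast (C : ChCx) {a b : ℕ} (h : a = b) : C.X a →+ C.X b :=
  h ▸ AddMonoidHom.id (C.X a)

/-- `T` is (a realization of) the tensor product `C₁ ⊗ C₂` of chain complexes, with
structure maps `ι p q : (C₁)_p ⊗ (C₂)_q →+ T_{p+q}`: in each degree `n`, `T_n` is the
direct sum `⊕_{p+q=n} (C₁)_p ⊗ (C₂)_q`, and the differential is given on pure tensors
by `∂(x ⊗ y) = ∂x ⊗ y + (−1)^{|x|} x ⊗ ∂y` (Koszul sign). -/
def IsTensorCx (C₁ C₂ T : ChCx)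
    (ι : ∀ p q, TensorProduct ℤ (C₁.X p) (C₂.X q) →+ T.X (p + q)) : Prop :=
  (∀ n, Function.Bijective
    ⇑(DirectSum.toAddMonoid
      (fun p : Fin (n + 1) =>
        (T.cast (Nat.add_sub_cancel' (Nat.lt_succ_iff.mp p.isLt))).comp
          (ι ↑p (n - ↑p))))) ∧
  (∀ p q (x : C₁.X (p + 1)) (y : C₂.X (q + 1)),
    T.d (p + q + 1) (T.cast (by omega) (ι (p + 1) (q + 1) (x ⊗ₜ[ℤ] y)))
      = T.cast (by omega) (ι p (q + 1) ((C₁.d p x) ⊗ₜ[ℤ] y))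
        + ((-1 : ℤ) ^ (p + 1)) •
            T.cast (by omega) (ι (p + 1) q (x ⊗ₜ[ℤ] (C₂.d q y)))) ∧
  (∀ p (x : C₁.X (p + 1)) (y : C₂.X 0),
    T.d p (T.cast (by omega) (ι (p + 1) 0 (x ⊗ₜ[ℤ] y)))
      = T.cast (by omega) (ι p 0 ((C₁.d p x) ⊗ₜ[ℤ] y))) ∧
  (∀ q (x : C₁.X 0) (y : C₂.X (q + 1)),
    T.d q (T.cast (by omega) (ι 0 (q + 1) (x ⊗ₜ[ℤ] y)))
      = T.cast (by omega) (ι 0 q (x ⊗ₜ[ℤ] (C₂.d q y))))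

-- cast lemmas
@[simp] theorem ChCx.cast_self (C : ChCx) {a : ℕ} (h : a = a) (x : C.X a) :
    C.cast h x = x := rfl

theorem ChCx.cast_cast (C : ChCx) {a b c : ℕ} (h : a = b) (h' : b = c) (x : C.X a) :
    C.cast h' (C.cast h x) = C.cast (h.trans h') x := by subst h; subst h'; rfl

theorem ChCx.cast_irrel (C : ChCx) {a b : ℕ} (h h' : a = b) (x : C.X a) :
    C.cast h x = C.cast h' x := rfl

/-- cast on the second factor of a tensor product. -/
def tcast (A : Type) [AddCommGroup A] (C : ChCx) {q q' : ℕ} (h : q = q') :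
    TensorProduct ℤ A (C.X q) →+ TensorProduct ℤ A (C.X q') := h ▸ AddMonoidHom.id _

@[simp] theorem tcast_self (A : Type) [AddCommGroup A] (C : ChCx) {q : ℕ} (h : q = q)
    (t : TensorProduct ℤ A (C.X q)) : tcast A C h t = t := rfl

theorem tcast_tmul (A : Type) [AddCommGroup A] (C : ChCx) {q q' : ℕ} (h : q = q')
    (x : A) (y : C.X q) : tcast A C h (x ⊗ₜ[ℤ] y) = x ⊗ₜ[ℤ] (C.cast h y) := by subst h; rfl

theorem fam_cast_succ {C D : ChCx} (f : ∀ n, C.X n →+ D.X (n+1)) {a b : ℕ} (h : a = b)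
    (x : C.X a) : f b (C.cast h x) = D.cast (by rw [h]) (f a x) := by subst h; rfl

theorem fam_cast {C D : ChCx} (f : ∀ n, C.X n →+ D.X n) {a b : ℕ} (h : a = b) (x : C.X a) :
    f b (C.cast h x) = D.cast h (f a x) := by subst h; rfl

section Tensor

variable {C₁ C₂ T : ChCx} {ι : ∀ p q, TensorProduct ℤ (C₁.X p) (C₂.X q) →+ T.X (p + q)}

/-- The structure map of the direct sum decomposition. -/
noncomputable def Phi (n : ℕ) :
    DirectSum (Fin (n+1)) (fun p => TensorProduct ℤ (C₁.X p) (C₂.X (n - (p:ℕ)))) →+ T.X n :=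
  DirectSum.toAddMonoid
    (fun p : Fin (n + 1) =>
      (T.cast (Nat.add_sub_cancel' (Nat.lt_succ_iff.mp p.isLt))).comp (ι ↑p (n - ↑p)))

noncomputable def eTen (hT : IsTensorCx C₁ C₂ T ι) (n : ℕ) :
    DirectSum (Fin (n+1)) (fun p => TensorProduct ℤ (C₁.X p) (C₂.X (n - (p:ℕ)))) ≃+ T.X n :=
  AddEquiv.ofBijective (Phi (ι := ι) n) (hT.1 n)

theorem eTen_of (hT : IsTensorCx C₁ C₂ T ι) (n : ℕ) (p : Fin (n+1))
    (t : TensorProduct ℤ (C₁.X p) (C₂.X (n - (p:ℕ)))) :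
    eTen hT n (DirectSum.of _ p t)
      = T.cast (Nat.add_sub_cancel' (Nat.lt_succ_iff.mp p.isLt)) (ι ↑p (n - ↑p) t) := by
  simp [eTen, Phi, AddEquiv.ofBijective]

theorem ι_tcast {p q q' : ℕ} (h : q = q') (t : TensorProduct ℤ (C₁.X p) (C₂.X q)) :
    ι p q' (tcast (C₁.X p) C₂ h t) = T.cast (by rw [h]) (ι p q t) := by subst h; rfl

theorem eTen_symm_cast (hT : IsTensorCx C₁ C₂ T ι) {p q n : ℕ} (h : p + q = n)
    (t : TensorProduct ℤ (C₁.X p) (C₂.X q)) :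
    (eTen hT n).symm (T.cast h (ι p q t))
      = DirectSum.of _ (⟨p, by omega⟩ : Fin (n+1))
          (tcast (C₁.X p) C₂ (show q = n - p by omega) t) := by
  rw [AddEquiv.symm_apply_eq, eTen_of, ι_tcast, T.cast_cast]

/-- Induction principle: every element of `T.X n` is a sum of pure-tensor images. -/
theorem tensor_induction (hT : IsTensorCx C₁ C₂ T ι) {n : ℕ} {P : T.X n → Prop}
    (h0 : P 0) (hadd : ∀ a b, P a → P b → P (a + b))
    (hpure : ∀ p q (h : p + q = n) (x : C₁.X p) (y : C₂.X q),
      P (T.cast h (ι p q (x ⊗ₜ[ℤ] y)))) :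
    ∀ c : T.X n, P c := by
  intro c
  obtain ⟨s, rfl⟩ := (eTen hT n).surjective c
  induction s using DirectSum.induction_on with
  | zero => simpa using h0
  | of p t =>
    rw [eTen_of]
    induction t using TensorProduct.induction_on with
    | zero => simpa using h0
    | tmul x y => exact hpure _ _ _ x y
    | add a b ha hb => rw [map_add, map_add]; exact hadd _ _ ha hb
  | add a b ha hb => rw [map_add]; exact hadd _ _ ha hb

end Tensor
section Maps

variable {C₁ C₂ T D₁ D₂ U : ChCx}
  {ι : ∀ p q, TensorProduct ℤ (C₁.X p) (C₂.X q) →+ T.X (p + q)}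
  {κ : ∀ p q, TensorProduct ℤ (D₁.X p) (D₂.X q) →+ U.X (p + q)}

/-- The induced map `f₁ ⊗ f₂` on (realizations of) tensor products. -/
noncomputable def tmapF (hT : IsTensorCx C₁ C₂ T ι)
    (f₁ : ∀ n, C₁.X n →+ D₁.X n) (f₂ : ∀ n, C₂.X n →+ D₂.X n) (n : ℕ) :
    T.X n →+ U.X n :=
  (DirectSum.toAddMonoid
    (fun p : Fin (n + 1) =>
      ((U.cast (Nat.add_sub_cancel' (Nat.lt_succ_iff.mp p.isLt))).comp
        ((κ ↑p (n - ↑p)).comp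
          (TensorProduct.map ((f₁ ↑p).toIntLinearMap)
            ((f₂ (n - ↑p)).toIntLinearMap)).toAddMonoidHom)))).comp
    (eTen hT n).symm.toAddMonoidHom

theorem tmapF_cast_ι (hT : IsTensorCx C₁ C₂ T ι)
    (f₁ : ∀ n, C₁.X n →+ D₁.X n) (f₂ : ∀ n, C₂.X n →+ D₂.X n)
    {p q n : ℕ} (h : p + q = n) (x : C₁.X p) (y : C₂.X q) :
    tmapF (κ := κ) hT f₁ f₂ n (T.cast h (ι p q (x ⊗ₜ[ℤ] y)))
      = U.cast h (κ p q ((f₁ p x) ⊗ₜ[ℤ] (f₂ q y))) := by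
  rw [tmapF, AddMonoidHom.comp_apply, AddEquiv.coe_toAddMonoidHom, eTen_symm_cast hT h,
    DirectSum.toAddMonoid_of]
  simp only [AddMonoidHom.comp_apply, tcast_tmul, LinearMap.toAddMonoidHom_coe,
    TensorProduct.map_tmul, AddMonoidHom.coe_toIntLinearMap]
  rw [fam_cast f₂, ← tcast_tmul, ι_tcast, U.cast_cast]

end Maps

section Eta

variable {C₁ C₂ T C₁' C₂' : ChCx}
  {ι : ∀ p q, TensorProduct ℤ (C₁.X p) (C₂.X q) →+ T.X (p + q)}

/-- The homotopy `η₁ ⊗ βα₂ + (Koszul) id ⊗ η₂` on the tensor product. -/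
noncomputable def etaF (hT : IsTensorCx C₁ C₂ T ι)
    (R₁ : Reduction C₁ C₁') (R₂ : Reduction C₂ C₂') (n : ℕ) :
    T.X n →+ T.X (n + 1) :=
  (DirectSum.toAddMonoid
    (fun p : Fin (n + 1) =>
      ((T.cast (show (↑p+1) + (n - ↑p) = n + 1 by
          have := Nat.lt_succ_iff.mp p.isLt; omega)).comp
        ((ι (↑p+1) (n - ↑p)).comp
          (TensorProduct.map ((R₁.η ↑p).toIntLinearMap)
            (((R₂.β.f (n - ↑p)).comp (R₂.α.f (n - ↑p))).toIntLinearMap)).toAddMonoidHom))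
      + ((-1 : ℤ) ^ (p : ℕ)) •
        ((T.cast (show ↑p + ((n - ↑p) + 1) = n + 1 by
            have := Nat.lt_succ_iff.mp p.isLt; omega)).comp
          ((ι ↑p ((n - ↑p)+1)).comp
            (TensorProduct.map (AddMonoidHom.id (C₁.X ↑p)).toIntLinearMap
              ((R₂.η (n - ↑p)).toIntLinearMap)).toAddMonoidHom)))).comp
    (eTen hT n).symm.toAddMonoidHom

theorem etaF_cast_ι (hT : IsTensorCx C₁ C₂ T ι)
    (R₁ : Reduction C₁ C₁') (R₂ : Reduction C₂ C₂')
    {p q n : ℕ} (h : p + q = n) (h1 : (p+1) + q = n + 1) (h2 : p + (q+1) = n + 1)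
    (x : C₁.X p) (y : C₂.X q) :
    etaF hT R₁ R₂ n (T.cast h (ι p q (x ⊗ₜ[ℤ] y)))
      = T.cast h1 (ι (p+1) q ((R₁.η p x) ⊗ₜ[ℤ] (R₂.β.f q (R₂.α.f q y))))
        + ((-1 : ℤ) ^ p) • T.cast h2 (ι p (q+1) (x ⊗ₜ[ℤ] (R₂.η q y))) := by
  rw [etaF, AddMonoidHom.comp_apply, AddEquiv.coe_toAddMonoidHom, eTen_symm_cast hT h,
    DirectSum.toAddMonoid_of]
  simp only [AddMonoidHom.add_apply, AddMonoidHom.comp_apply, tcast_tmul,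
    LinearMap.toAddMonoidHom_coe, TensorProduct.map_tmul,
    AddMonoidHom.coe_toIntLinearMap, AddMonoidHom.smul_apply, AddMonoidHom.id_apply]
  rw [fam_cast R₂.α.f, fam_cast R₂.β.f, fam_cast_succ R₂.η,
    ← tcast_tmul, ← tcast_tmul, ι_tcast, ι_tcast, T.cast_cast, T.cast_cast]

end Eta
section D

variable {C₁ C₂ T : ChCx} {ι : ∀ p q, TensorProduct ℤ (C₁.X p) (C₂.X q) →+ T.X (p + q)}

theorem d_tt (hT : IsTensorCx C₁ C₂ T ι) {p q n : ℕ} (h : (p+1) + (q+1) = n + 1)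
    (h1 : p + (q+1) = n) (h2 : (p+1) + q = n) (x : C₁.X (p+1)) (y : C₂.X (q+1)) :
    T.d n (T.cast h (ι (p+1) (q+1) (x ⊗ₜ[ℤ] y)))
      = T.cast h1 (ι p (q+1) ((C₁.d p x) ⊗ₜ[ℤ] y))
        + ((-1 : ℤ) ^ (p+1)) • T.cast h2 (ι (p+1) q (x ⊗ₜ[ℤ] (C₂.d q y))) := by
  obtain rfl : n = p + q + 1 := by omega
  exact hT.2.1 p q x y

theorem d_t0 (hT : IsTensorCx C₁ C₂ T ι) {p n : ℕ} (h : (p+1) + 0 = n + 1)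
    (h1 : p + 0 = n) (x : C₁.X (p+1)) (y : C₂.X 0) :
    T.d n (T.cast h (ι (p+1) 0 (x ⊗ₜ[ℤ] y)))
      = T.cast h1 (ι p 0 ((C₁.d p x) ⊗ₜ[ℤ] y)) := by
  obtain rfl : n = p := by omega
  exact hT.2.2.1 _ x y

theorem d_0t (hT : IsTensorCx C₁ C₂ T ι) {q n : ℕ} (h : 0 + (q+1) = n + 1)
    (h1 : 0 + q = n) (x : C₁.X 0) (y : C₂.X (q+1)) :
    T.d n (T.cast h (ι 0 (q+1) (x ⊗ₜ[ℤ] y)))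
      = T.cast h1 (ι 0 q (x ⊗ₜ[ℤ] (C₂.d q y))) := by
  obtain rfl : n = q := by omega
  exact hT.2.2.2 _ x y

end D

section Comm

variable {C₁ C₂ T D₁ D₂ U : ChCx}
  {ι : ∀ p q, TensorProduct ℤ (C₁.X p) (C₂.X q) →+ T.X (p + q)}
  {κ : ∀ p q, TensorProduct ℤ (D₁.X p) (D₂.X q) →+ U.X (p + q)}

theorem tmapF_comm (hT : IsTensorCx C₁ C₂ T ι) (hU : IsTensorCx D₁ D₂ U κ)
    (f₁ : ChMap C₁ D₁) (f₂ : ChMap C₂ D₂) (n : ℕ) (c : T.X (n+1)) :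
    tmapF (κ := κ) hT f₁.f f₂.f n (T.d n c) = U.d n (tmapF (κ := κ) hT f₁.f f₂.f (n+1) c) := by
  induction c using tensor_induction hT with
  | h0 => simp
  | hadd a b ha hb => rw [map_add, map_add, ha, hb, map_add, map_add]
  | hpure p q h x y =>
    match p, q, h, x, y with
    | 0, 0, h, x, y => omega
    | 0, q+1, h, x, y =>
      have h1 : 0 + q = n := by omega
      rw [d_0t hT h h1, tmapF_cast_ι, tmapF_cast_ι, d_0t hU h h1, f₂.comm]
    | p+1, 0, h, x, y =>
      have h1 : p + 0 = n := by omega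
      rw [d_t0 hT h h1, tmapF_cast_ι, tmapF_cast_ι, d_t0 hU h h1, f₁.comm]
    | p+1, q+1, h, x, y =>
      have h1 : p + (q+1) = n := by omega
      have h2 : (p+1) + q = n := by omega
      rw [d_tt hT h h1 h2, map_add, map_zsmul, tmapF_cast_ι, tmapF_cast_ι, tmapF_cast_ι,
        d_tt hU h h1 h2, f₁.comm, f₂.comm]

end Comm
section Red

variable {C₁ C₁' C₂ C₂' T T' : ChCx}
  {ι : ∀ p q, TensorProduct ℤ (C₁.X p) (C₂.X q) →+ T.X (p + q)}
  {ι' : ∀ p q, TensorProduct ℤ (C₁'.X p) (C₂'.X q) →+ T'.X (p + q)}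
  (hT : IsTensorCx C₁ C₂ T ι) (hT' : IsTensorCx C₁' C₂' T' ι')
  (R₁ : Reduction C₁ C₁') (R₂ : Reduction C₂ C₂')

theorem red_ηβ (n : ℕ) (c : T'.X n) :
    etaF hT R₁ R₂ n (tmapF (κ := ι) hT' R₁.β.f R₂.β.f n c) = 0 := by
  induction c using tensor_induction hT' with
  | h0 => simp
  | hadd a b ha hb => rw [map_add, map_add, ha, hb, add_zero]
  | hpure p q h x y =>
    rw [tmapF_cast_ι, etaF_cast_ι hT R₁ R₂ h (by omega) (by omega), R₁.ηβ, R₂.ηβ]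
    simp

theorem red_αη (n : ℕ) (c : T.X n) :
    tmapF (κ := ι') hT R₁.α.f R₂.α.f (n+1) (etaF hT R₁ R₂ n c) = 0 := by
  induction c using tensor_induction hT with
  | h0 => simp
  | hadd a b ha hb => rw [map_add, map_add, ha, hb, add_zero]
  | hpure p q h x y =>
    rw [etaF_cast_ι hT R₁ R₂ h (by omega) (by omega), map_add, map_zsmul,
      tmapF_cast_ι, tmapF_cast_ι, R₁.αη, R₂.αη]
    simp

theorem red_αβ (n : ℕ) (c : T'.X n) :
    tmapF (κ := ι') hT R₁.α.f R₂.α.f n (tmapF (κ := ι) hT' R₁.β.f R₂.β.f n c) = c := by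
  induction c using tensor_induction hT' with
  | h0 => simp
  | hadd a b ha hb => rw [map_add, map_add, ha, hb]
  | hpure p q h x y => rw [tmapF_cast_ι, tmapF_cast_ι, R₁.αβ, R₂.αβ]

theorem red_ηη (n : ℕ) (c : T.X n) :
    etaF hT R₁ R₂ (n+1) (etaF hT R₁ R₂ n c) = 0 := by
  induction c using tensor_induction hT with
  | h0 => simp
  | hadd a b ha hb => rw [map_add, map_add, ha, hb, add_zero]
  | hpure p q h x y =>
    rw [etaF_cast_ι hT R₁ R₂ h (by omega) (by omega), map_add, map_zsmul,
      etaF_cast_ι hT R₁ R₂ (by omega) (by omega) (by omega),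
      etaF_cast_ι hT R₁ R₂ (by omega) (by omega) (by omega),
      R₁.ηη, R₂.ηη, R₂.ηβ, R₂.αη]
    simp

end Red
section Hmt

variable {C₁ C₁' C₂ C₂' T T' : ChCx}
  {ι : ∀ p q, TensorProduct ℤ (C₁.X p) (C₂.X q) →+ T.X (p + q)}
  {ι' : ∀ p q, TensorProduct ℤ (C₁'.X p) (C₂'.X q) →+ T'.X (p + q)}
  (hT : IsTensorCx C₁ C₂ T ι) (hT' : IsTensorCx C₁' C₂' T' ι')
  (R₁ : Reduction C₁ C₁') (R₂ : Reduction C₂ C₂')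

theorem red_hmt0 (c : T.X 0) :
    T.d 0 (etaF hT R₁ R₂ 0 c)
      = c - tmapF (κ := ι) hT' R₁.β.f R₂.β.f 0
          (tmapF (κ := ι') hT R₁.α.f R₂.α.f 0 c) := by
  induction c using tensor_induction hT with
  | h0 => simp
  | hadd a b ha hb => simp only [map_add]; rw [ha, hb]; abel
  | hpure p q h x y =>
    match p, q, h, x, y with
    | 0, 0, h, x, y =>
      rw [etaF_cast_ι hT R₁ R₂ h (by omega) (by omega), map_add, map_zsmul,
        d_t0 hT (by omega) (by omega), d_0t hT (by omega) (by omega),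
        tmapF_cast_ι, tmapF_cast_ι, R₁.hmt0, R₂.hmt0]
      simp only [ChCx.cast_self, pow_zero, one_smul,
        TensorProduct.sub_tmul, TensorProduct.tmul_sub, map_sub]
      abel
    | 0, q+1, h, x, y => omega
    | p+1, q, h, x, y => omega

theorem red_hmt (n : ℕ) (c : T.X (n+1)) :
    T.d (n+1) (etaF hT R₁ R₂ (n+1) c) + etaF hT R₁ R₂ n (T.d n c)
      = c - tmapF (κ := ι) hT' R₁.β.f R₂.β.f (n+1)
          (tmapF (κ := ι') hT R₁.α.f R₂.α.f (n+1) c) := by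
  induction c using tensor_induction hT with
  | h0 => simp
  | hadd a b ha hb => simp only [map_add]; rw [add_add_add_comm, ha, hb]; abel
  | hpure p q h x y =>
    match p, q, h, x, y with
    | 0, 0, h, x, y => omega
    | 0, q+1, h, x, y =>
      have e0 : 0 + q = n := by omega
      have e1 : (0+1) + (q+1) = (n+1) + 1 := by omega
      have e2 : 0 + (q+1+1) = (n+1) + 1 := by omega
      have e4 : (0+1) + q = n + 1 := by omega
      have hβα : R₂.β.f q (R₂.α.f q (C₂.d q y))
          = C₂.d q (R₂.β.f (q+1) (R₂.α.f (q+1) y)) := by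
        rw [R₂.α.comm, R₂.β.comm]
      have hd₁ := R₁.hmt0 x
      have hd₂ := eq_sub_of_add_eq (R₂.hmt q y)
      rw [etaF_cast_ι hT R₁ R₂ h e1 e2, map_add, map_zsmul,
        d_tt hT e1 h e4, d_0t hT e2 h,
        d_0t hT h e0, etaF_cast_ι hT R₁ R₂ e0 e4 h,
        tmapF_cast_ι, tmapF_cast_ι, hβα, hd₁, hd₂]
      simp only [TensorProduct.sub_tmul, TensorProduct.tmul_sub, map_sub, map_add]
      module
    | p+1, 0, h, x, y =>
      have e0 : p + 0 = n := by omega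
      have e1 : (p+1+1) + 0 = (n+1) + 1 := by omega
      have e2 : (p+1) + (0+1) = (n+1) + 1 := by omega
      have e4 : p + (0+1) = n + 1 := by omega
      have hd₁ := eq_sub_of_add_eq (R₁.hmt p x)
      have hd₂ := R₂.hmt0 y
      rw [etaF_cast_ι hT R₁ R₂ h e1 e2, map_add, map_zsmul,
        d_t0 hT e1 h, d_tt hT e2 e4 h,
        d_t0 hT h e0, etaF_cast_ι hT R₁ R₂ e0 h e4,
        tmapF_cast_ι, tmapF_cast_ι, hd₁, hd₂]
      simp only [TensorProduct.sub_tmul, TensorProduct.tmul_sub, map_sub, map_add]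
      rcases Nat.even_or_odd p with hp | hp <;>
        simp only [hp.neg_one_pow, hp.add_one.neg_one_pow, hp.add_one.add_one.neg_one_pow,
          one_smul, neg_smul, neg_neg, smul_add, smul_sub, smul_neg, neg_sub, map_add, map_sub] <;>
        abel
    | p+1, q+1, h, x, y =>
      have e5 : p + (q+1) = n := by omega
      have e6 : (p+1) + q = n := by omega
      have e1 : (p+1+1) + (q+1) = (n+1) + 1 := by omega
      have e2 : (p+1) + (q+1+1) = (n+1) + 1 := by omega
      have e7 : (p+1+1) + q = n + 1 := by omega
      have e8 : p + (q+1+1) = n + 1 := by omega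
      have hβα : R₂.β.f q (R₂.α.f q (C₂.d q y))
          = C₂.d q (R₂.β.f (q+1) (R₂.α.f (q+1) y)) := by
        rw [R₂.α.comm, R₂.β.comm]
      have hd₁ := eq_sub_of_add_eq (R₁.hmt p x)
      have hd₂ := eq_sub_of_add_eq (R₂.hmt q y)
      rw [etaF_cast_ι hT R₁ R₂ h e1 e2, map_add, map_zsmul,
        d_tt hT e1 h e7, d_tt hT e2 e8 h,
        d_tt hT h e5 e6, map_add, map_zsmul,
        etaF_cast_ι hT R₁ R₂ e5 h e8, etaF_cast_ι hT R₁ R₂ e6 e7 h,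
        tmapF_cast_ι, tmapF_cast_ι, hβα, hd₁, hd₂]
      simp only [TensorProduct.sub_tmul, TensorProduct.tmul_sub, map_sub, map_add]
      rcases Nat.even_or_odd p with hp | hp <;>
        simp only [hp.neg_one_pow, hp.add_one.neg_one_pow, hp.add_one.add_one.neg_one_pow,
          one_smul, neg_smul, neg_neg, smul_add, smul_sub, smul_neg, neg_sub, map_add, map_sub] <;>
        abel

end Hmt
/-- the tensor product of two reductions is a reduction
`C₁ ⊗ C₂ ⇒ C₁' ⊗ C₂'`, with `α = α₁ ⊗ α₂`, `β = β₁ ⊗ β₂` and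
`η = η₁ ⊗ β₂α₂ + id ⊗ η₂` (with Koszul signs). -/
theorem reduction_tensor (C₁ C₁' C₂ C₂' T T' : ChCx)
    (R₁ : Reduction C₁ C₁') (R₂ : Reduction C₂ C₂')
    (ι : ∀ p q, TensorProduct ℤ (C₁.X p) (C₂.X q) →+ T.X (p + q))
    (ι' : ∀ p q, TensorProduct ℤ (C₁'.X p) (C₂'.X q) →+ T'.X (p + q))
    (hT : IsTensorCx C₁ C₂ T ι) (hT' : IsTensorCx C₁' C₂' T' ι') :
    ∃ R : Reduction T T',
      (∀ p q (x : C₁.X p) (y : C₂.X q),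
        R.α.f (p + q) (ι p q (x ⊗ₜ[ℤ] y))
          = ι' p q ((R₁.α.f p x) ⊗ₜ[ℤ] (R₂.α.f q y))) ∧
      (∀ p q (x : C₁'.X p) (y : C₂'.X q),
        R.β.f (p + q) (ι' p q (x ⊗ₜ[ℤ] y))
          = ι p q ((R₁.β.f p x) ⊗ₜ[ℤ] (R₂.β.f q y))) ∧
      (∀ p q (x : C₁.X p) (y : C₂.X q),
        R.η (p + q) (ι p q (x ⊗ₜ[ℤ] y))
          = T.cast (by omega)
              (ι (p + 1) q ((R₁.η p x) ⊗ₜ[ℤ] (R₂.β.f q (R₂.α.f q y))))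
            + ((-1 : ℤ) ^ p) •
                T.cast (by omega) (ι p (q + 1) (x ⊗ₜ[ℤ] (R₂.η q y)))) := by
  refine ⟨{
    α := ⟨fun n => tmapF (κ := ι') hT R₁.α.f R₂.α.f n, tmapF_comm hT hT' R₁.α R₂.α⟩
    β := ⟨fun n => tmapF (κ := ι) hT' R₁.β.f R₂.β.f n, tmapF_comm hT' hT R₁.β R₂.β⟩
    η := etaF hT R₁ R₂
    ηβ := red_ηβ hT hT' R₁ R₂
    αη := red_αη hT R₁ R₂
    αβ := red_αβ hT hT' R₁ R₂
    ηη := red_ηη hT R₁ R₂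
    hmt0 := red_hmt0 hT hT' R₁ R₂
    hmt := red_hmt hT hT' R₁ R₂ }, ?_, ?_, ?_⟩
  · exact fun p q x y => tmapF_cast_ι hT R₁.α.f R₂.α.f rfl x y
  · exact fun p q x y => tmapF_cast_ι hT' R₁.β.f R₂.β.f rfl x y
  · exact fun p q x y => etaF_cast_ι hT R₁ R₂ rfl (by omega) (by omega) x y
end
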